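/- Fix an integer n ≥ 1 and let τ be the tau function of Σ(2,5,10n+3). Define M_i := 10i+1 for 0 ≤ i ≤ 2n-1 and M_i := 10i+7 for 2n ≤ i ≤ 3n-1, and m_i := 10i for 0 ≤ i ≤ 3n. Then: (a) τ(j+1) ≥ τ(j) whenever m_i ≤ j < M_i with 0 ≤ i ≤ 3n-1, τ(j+1) ≤ τ(j) whenever M_i ≤ j < m_{i+1} with 0 ≤ i ≤ 3n-1, and τ(j+1) ≥ τ(j) for all j ≥ m_{3n}; (b) τ(M_i) = 1-i for 0 ≤ i ≤ n-1, τ(M_i) = 1-n for n ≤ i ≤ 2n-1, and τ(M_i) = 2-3n+i for 2n ≤ i ≤ 3n-1; (c) τ(m_i) = -i for 0 ≤ i ≤ n-1, τ(m_i) = -n for n ≤ i ≤ 2n, and τ(m_i) = -3n+i for 2n+1 ≤ i ≤ 3n. -/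

import Mathlib

section TauAux

private lemma floor_div_q' (a b : ℤ) (hb : 0 < b) : ⌊(a : ℚ) / (b : ℚ)⌋ = a / b := by
  lift b to ℕ using hb.le
  exact_mod_cast Rat.floor_intCast_div_natCast a b

private lemma ceil_div_q' (a b : ℤ) (hb : 0 < b) : ⌈(a : ℚ) / (b : ℚ)⌉ = -((-a) / b) := by
  rw [← neg_neg ((a : ℚ) / b), Int.ceil_neg, ← neg_div, ← Int.cast_neg, floor_div_q' _ _ hb]

private lemma ediv_eq_of' (x m t : ℤ) (h1 : m * t ≤ x) (h2 : x < m * (t + 1)) :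
    x / m = t := by
  have hm : 0 < m := by nlinarith
  have hx : x = (x - m * t) + m * t := by ring
  rw [hx, Int.add_mul_ediv_left _ _ hm.ne',
    Int.ediv_eq_zero_of_lt (by omega) (by nlinarith), zero_add]

end TauAux

/-- `Δ_j = 1 + 2j - ⌈j/2⌉ - ⌈4j/5⌉ - ⌈j(7n+2)/(10n+3)⌉` for the Seifert data
`(-2, (2,1), (5,4), (10n+3, 7n+2))` of `Σ(2,5,10n+3)`. -/
noncomputable def delta25p (n j : ℤ) : ℤ :=
  1 + 2 * j - ⌈(j : ℚ) / 2⌉ - ⌈(4 * j : ℚ) / 5⌉ - ⌈(j * (7 * n + 2) : ℚ) / (10 * n + 3 : ℚ)⌉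

/-- The tau function `τ(k) = Σ_{j=0}^{k-1} Δ_j` of `Σ(2,5,10n+3)`. -/
noncomputable def tau25p (n k : ℤ) : ℤ := ∑ j ∈ Finset.range k.toNat, delta25p n (j : ℤ)

/-- `M_i = 10i + 1` for `i ≤ 2n-1` and `M_i = 10i + 7` for `2n ≤ i`. -/
def M25p (n i : ℤ) : ℤ := if i ≤ 2 * n - 1 then 10 * i + 1 else 10 * i + 7

/-- `m_i = 10i`. -/
def m25p (i : ℤ) : ℤ := 10 * i


private lemma delta_eq (n j : ℤ) (hn : 1 ≤ n) :
    delta25p n j = 1 + 2*j + (-j)/2 + (-(4*j))/5 + (-(j*(7*n+2)))/(10*n+3) := by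
  have hb : (0:ℤ) < 10*n+3 := by omega
  have e1 : ⌈(j:ℚ)/2⌉ = -((-j)/2 : ℤ) := by
    rw [show ((2:ℚ)) = ((2:ℤ):ℚ) by norm_num]; exact ceil_div_q' j 2 (by norm_num)
  have e2 : ⌈(4*(j:ℚ))/5⌉ = -((-(4*j))/5 : ℤ) := by
    rw [show (4*(j:ℚ)) = ((4*j:ℤ):ℚ) by push_cast; ring,
        show ((5:ℚ)) = ((5:ℤ):ℚ) by norm_num]
    exact ceil_div_q' _ _ (by norm_num)
  have e3 : ⌈((j:ℚ)*(7*(n:ℚ)+2))/(10*(n:ℚ)+3)⌉ = -((-(j*(7*n+2)))/(10*n+3) : ℤ) := by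
    rw [show ((j:ℚ)*(7*(n:ℚ)+2)) = ((j*(7*n+2):ℤ):ℚ) by push_cast; ring,
        show (10*(n:ℚ)+3) = ((10*n+3:ℤ):ℚ) by push_cast; ring]
    exact ceil_div_q' _ _ hb
  unfold delta25p
  rw [e1, e2, e3]; ring

private lemma delta_key (n q r : ℤ) (hn : 1 ≤ n) :
    delta25p n (10*q+r) = 1 + (10*q+r) + (-(10*q+r))/2 + (-(4*(10*q+r)))/5 + 3*q
      + (q + r*(3*n+1))/(10*n+3) := by
  rw [delta_eq n _ hn,
    show -((10*q+r)*(7*n+2)) = (q + r*(3*n+1)) + (10*n+3)*(3*q - (10*q+r)) from by ring,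
    Int.add_mul_ediv_left _ _ (by omega : (10*n+3:ℤ) ≠ 0)]
  ring

private lemma delta_eval (n q r t : ℤ) (hn : 1 ≤ n)
    (h1 : (10*n+3) * t ≤ q + r*(3*n+1))
    (h2 : q + r*(3*n+1) < (10*n+3) * (t+1)) :
    delta25p n (10*q+r) = 1 + (10*q+r) + (-(10*q+r))/2 + (-(4*(10*q+r)))/5 + 3*q + t := by
  rw [delta_key n q r hn, ediv_eq_of' _ _ _ h1 h2]

private lemma tau_succ (n j : ℤ) (h : 0 ≤ j) :
    tau25p n (j + 1) = tau25p n j + delta25p n j := by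
  unfold tau25p
  rw [show (j+1).toNat = j.toNat + 1 from by omega, Finset.sum_range_succ,
    Int.toNat_of_nonneg h]

private lemma tau_zero (n : ℤ) : tau25p n 0 = 0 := by simp [tau25p]

private lemma tau_step10 (n q : ℤ) (hq : 0 ≤ q) :
    tau25p n (10*q + 10) = tau25p n (10*q)
      + delta25p n (10*q) + delta25p n (10*q+1) + delta25p n (10*q+2) + delta25p n (10*q+3) + delta25p n (10*q+4) + delta25p n (10*q+5) + delta25p n (10*q+6) + delta25p n (10*q+7) + delta25p n (10*q+8) + delta25p n (10*q+9) := by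
  have e1 : tau25p n (10*q+1) = tau25p n (10*q) + delta25p n (10*q) := tau_succ n _ (by omega)
  have e2 : tau25p n (10*q+2) = tau25p n (10*q+1) + delta25p n (10*q+1) := by
    rw [show (10*q+2 : ℤ) = (10*q+1)+1 from by ring]; exact tau_succ n _ (by omega)
  have e3 : tau25p n (10*q+3) = tau25p n (10*q+2) + delta25p n (10*q+2) := by
    rw [show (10*q+3 : ℤ) = (10*q+2)+1 from by ring]; exact tau_succ n _ (by omega)
  have e4 : tau25p n (10*q+4) = tau25p n (10*q+3) + delta25p n (10*q+3) := by
    rw [show (10*q+4 : ℤ) = (10*q+3)+1 from by ring]; exact tau_succ n _ (by omega)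
  have e5 : tau25p n (10*q+5) = tau25p n (10*q+4) + delta25p n (10*q+4) := by
    rw [show (10*q+5 : ℤ) = (10*q+4)+1 from by ring]; exact tau_succ n _ (by omega)
  have e6 : tau25p n (10*q+6) = tau25p n (10*q+5) + delta25p n (10*q+5) := by
    rw [show (10*q+6 : ℤ) = (10*q+5)+1 from by ring]; exact tau_succ n _ (by omega)
  have e7 : tau25p n (10*q+7) = tau25p n (10*q+6) + delta25p n (10*q+6) := by
    rw [show (10*q+7 : ℤ) = (10*q+6)+1 from by ring]; exact tau_succ n _ (by omega)
  have e8 : tau25p n (10*q+8) = tau25p n (10*q+7) + delta25p n (10*q+7) := by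
    rw [show (10*q+8 : ℤ) = (10*q+7)+1 from by ring]; exact tau_succ n _ (by omega)
  have e9 : tau25p n (10*q+9) = tau25p n (10*q+8) + delta25p n (10*q+8) := by
    rw [show (10*q+9 : ℤ) = (10*q+8)+1 from by ring]; exact tau_succ n _ (by omega)
  have e10 : tau25p n (10*q+10) = tau25p n (10*q+9) + delta25p n (10*q+9) := by
    rw [show (10*q+10 : ℤ) = (10*q+9)+1 from by ring]; exact tau_succ n _ (by omega)
  omega

private lemma tau_step7 (n q : ℤ) (hq : 0 ≤ q) :
    tau25p n (10*q + 7) = tau25p n (10*q)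
      + delta25p n (10*q) + delta25p n (10*q+1) + delta25p n (10*q+2) + delta25p n (10*q+3) + delta25p n (10*q+4) + delta25p n (10*q+5) + delta25p n (10*q+6) := by
  have e1 : tau25p n (10*q+1) = tau25p n (10*q) + delta25p n (10*q) := tau_succ n _ (by omega)
  have e2 : tau25p n (10*q+2) = tau25p n (10*q+1) + delta25p n (10*q+1) := by
    rw [show (10*q+2 : ℤ) = (10*q+1)+1 from by ring]; exact tau_succ n _ (by omega)
  have e3 : tau25p n (10*q+3) = tau25p n (10*q+2) + delta25p n (10*q+2) := by
    rw [show (10*q+3 : ℤ) = (10*q+2)+1 from by ring]; exact tau_succ n _ (by omega)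
  have e4 : tau25p n (10*q+4) = tau25p n (10*q+3) + delta25p n (10*q+3) := by
    rw [show (10*q+4 : ℤ) = (10*q+3)+1 from by ring]; exact tau_succ n _ (by omega)
  have e5 : tau25p n (10*q+5) = tau25p n (10*q+4) + delta25p n (10*q+4) := by
    rw [show (10*q+5 : ℤ) = (10*q+4)+1 from by ring]; exact tau_succ n _ (by omega)
  have e6 : tau25p n (10*q+6) = tau25p n (10*q+5) + delta25p n (10*q+5) := by
    rw [show (10*q+6 : ℤ) = (10*q+5)+1 from by ring]; exact tau_succ n _ (by omega)
  have e7 : tau25p n (10*q+7) = tau25p n (10*q+6) + delta25p n (10*q+6) := by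
    rw [show (10*q+7 : ℤ) = (10*q+6)+1 from by ring]; exact tau_succ n _ (by omega)
  omega

private lemma decA (n q : ℤ) (hn : 1 ≤ n) (h0 : 0 ≤ q) (hA : q ≤ n - 1) :
    tau25p n (10*q + 10) = tau25p n (10*q) + (-1) := by
  have hs := tau_step10 n q h0
  have d0 : delta25p n (10*q) = 1 := by
    have h := delta_eval n q 0 0 hn (by omega) (by omega)
    rw [show (10*q+(0:ℤ)) = 10*q from by ring] at h
    omega
  have d1 : delta25p n (10*q+1) = 0 := by
    have h := delta_eval n q 1 0 hn (by omega) (by omega)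
    omega
  have d2 : delta25p n (10*q+2) = 0 := by
    have h := delta_eval n q 2 0 hn (by omega) (by omega)
    omega
  have d3 : delta25p n (10*q+3) = -1 := by
    have h := delta_eval n q 3 0 hn (by omega) (by omega)
    omega
  have d4 : delta25p n (10*q+4) = 0 := by
    have h := delta_eval n q 4 1 hn (by omega) (by omega)
    omega
  have d5 : delta25p n (10*q+5) = 0 := by
    have h := delta_eval n q 5 1 hn (by omega) (by omega)
    omega
  have d6 : delta25p n (10*q+6) = 0 := by
    have h := delta_eval n q 6 1 hn (by omega) (by omega)
    omega
  have d7 : delta25p n (10*q+7) = 0 := by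
    have h := delta_eval n q 7 2 hn (by omega) (by omega)
    omega
  have d8 : delta25p n (10*q+8) = 0 := by
    have h := delta_eval n q 8 2 hn (by omega) (by omega)
    omega
  have d9 : delta25p n (10*q+9) = -1 := by
    have h := delta_eval n q 9 2 hn (by omega) (by omega)
    omega
  omega

private lemma decB (n q : ℤ) (hn : 1 ≤ n) (h0 : 0 ≤ q) (hB1 : n ≤ q) (hB2 : q ≤ 2*n - 1) :
    tau25p n (10*q + 10) = tau25p n (10*q) + (0) := by
  have hs := tau_step10 n q h0
  have d0 : delta25p n (10*q) = 1 := by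
    have h := delta_eval n q 0 0 hn (by omega) (by omega)
    rw [show (10*q+(0:ℤ)) = 10*q from by ring] at h
    omega
  have d1 : delta25p n (10*q+1) = 0 := by
    have h := delta_eval n q 1 0 hn (by omega) (by omega)
    omega
  have d2 : delta25p n (10*q+2) = 0 := by
    have h := delta_eval n q 2 0 hn (by omega) (by omega)
    omega
  have d3 : delta25p n (10*q+3) = 0 := by
    have h := delta_eval n q 3 1 hn (by omega) (by omega)
    omega
  have d4 : delta25p n (10*q+4) = 0 := by
    have h := delta_eval n q 4 1 hn (by omega) (by omega)
    omega
  have d5 : delta25p n (10*q+5) = 0 := by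
    have h := delta_eval n q 5 1 hn (by omega) (by omega)
    omega
  have d6 : delta25p n (10*q+6) = 0 := by
    have h := delta_eval n q 6 1 hn (by omega) (by omega)
    omega
  have d7 : delta25p n (10*q+7) = 0 := by
    have h := delta_eval n q 7 2 hn (by omega) (by omega)
    omega
  have d8 : delta25p n (10*q+8) = 0 := by
    have h := delta_eval n q 8 2 hn (by omega) (by omega)
    omega
  have d9 : delta25p n (10*q+9) = -1 := by
    have h := delta_eval n q 9 2 hn (by omega) (by omega)
    omega
  omega

private lemma decC (n q : ℤ) (hn : 1 ≤ n) (h0 : 0 ≤ q) (hC1 : 2*n ≤ q) (hC2 : q ≤ 3*n - 1) :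
    tau25p n (10*q + 10) = tau25p n (10*q) + (1) := by
  have hs := tau_step10 n q h0
  have d0 : delta25p n (10*q) = 1 := by
    have h := delta_eval n q 0 0 hn (by omega) (by omega)
    rw [show (10*q+(0:ℤ)) = 10*q from by ring] at h
    omega
  have d1 : delta25p n (10*q+1) = 0 := by
    have h := delta_eval n q 1 0 hn (by omega) (by omega)
    omega
  have d2 : delta25p n (10*q+2) = 0 := by
    have h := delta_eval n q 2 0 hn (by omega) (by omega)
    omega
  have d3 : delta25p n (10*q+3) = 0 := by
    have h := delta_eval n q 3 1 hn (by omega) (by omega)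
    omega
  have d4 : delta25p n (10*q+4) = 0 := by
    have h := delta_eval n q 4 1 hn (by omega) (by omega)
    omega
  have d5 : delta25p n (10*q+5) = 0 := by
    have h := delta_eval n q 5 1 hn (by omega) (by omega)
    omega
  have d6 : delta25p n (10*q+6) = 1 := by
    have h := delta_eval n q 6 2 hn (by omega) (by omega)
    omega
  have d7 : delta25p n (10*q+7) = 0 := by
    have h := delta_eval n q 7 2 hn (by omega) (by omega)
    omega
  have d8 : delta25p n (10*q+8) = 0 := by
    have h := delta_eval n q 8 2 hn (by omega) (by omega)
    omega
  have d9 : delta25p n (10*q+9) = -1 := by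
    have h := delta_eval n q 9 2 hn (by omega) (by omega)
    omega
  omega

private lemma tau_m (n : ℤ) (hn : 1 ≤ n) :
    ∀ i : ℤ, 0 ≤ i → i ≤ 3*n →
      tau25p n (10*i) = -(min i n) + max (i - 2*n) 0 := by
  intro i hi
  refine Int.le_induction (motive := fun i _ => i ≤ 3*n →
      tau25p n (10*i) = -(min i n) + max (i - 2*n) 0) ?_ ?_ i hi
  · intro _
    rw [show (10*(0:ℤ)) = 0 from by ring, tau_zero]
    omega
  · intro i hi ih h3
    have hprev := ih (by omega)
    rw [show 10*(i+1) = 10*i + 10 from by ring]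
    rcases le_or_gt i (n-1) with h | h
    · rw [decA n i hn hi h]; omega
    · rcases le_or_gt i (2*n-1) with h' | h'
      · rw [decB n i hn hi (by omega) h']; omega
      · rw [decC n i hn hi (by omega) (by omega)]; omega

/-- Structure of the tau function of `Σ(2,5,10n+3)` (`n ≥ 1`): monotonicity between the
local extrema `M_i`, `m_i`, and the values of `τ` at those extrema. -/
theorem tau_structure_25p (n : ℤ) (hn : 1 ≤ n) :
    (∀ i : ℤ, 0 ≤ i → i ≤ 3 * n - 1 → ∀ j : ℤ, m25p i ≤ j → j < M25p n i →
      tau25p n j ≤ tau25p n (j + 1)) ∧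
    (∀ i : ℤ, 0 ≤ i → i ≤ 3 * n - 1 → ∀ j : ℤ, M25p n i ≤ j → j < m25p (i + 1) →
      tau25p n (j + 1) ≤ tau25p n j) ∧
    (∀ j : ℤ, m25p (3 * n) ≤ j → tau25p n j ≤ tau25p n (j + 1)) ∧
    (∀ i : ℤ, 0 ≤ i → i ≤ n - 1 → tau25p n (M25p n i) = 1 - i) ∧
    (∀ i : ℤ, n ≤ i → i ≤ 2 * n - 1 → tau25p n (M25p n i) = 1 - n) ∧
    (∀ i : ℤ, 2 * n ≤ i → i ≤ 3 * n - 1 → tau25p n (M25p n i) = 2 - 3 * n + i) ∧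
    (∀ i : ℤ, 0 ≤ i → i ≤ n - 1 → tau25p n (m25p i) = -i) ∧
    (∀ i : ℤ, n ≤ i → i ≤ 2 * n → tau25p n (m25p i) = -n) ∧
    (∀ i : ℤ, 2 * n + 1 ≤ i → i ≤ 3 * n → tau25p n (m25p i) = -3 * n + i) := by
  refine ⟨?_, ?_, ?_, ?_, ?_, ?_, ?_, ?_, ?_⟩
  · -- increasing on [m_i, M_i)
    intro i h0 h3 j hj hjM
    rw [m25p] at hj
    rw [M25p] at hjM
    rw [tau_succ n j (by omega)]
    rcases le_or_gt i (2*n-1) with hc | hc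
    · rw [if_pos hc] at hjM
      have hj' : j = 10*i + 0 := by omega
      rw [hj', delta_eval n i 0 0 hn (by omega) (by omega)]; omega
    · rw [if_neg (by omega)] at hjM
      have hr : j = 10*i + 0 ∨ j = 10*i + 1 ∨ j = 10*i + 2 ∨ j = 10*i + 3 ∨ j = 10*i + 4 ∨ j = 10*i + 5 ∨ j = 10*i + 6 := by omega
      rcases hr with h0|h1|h2|h3|h4|h5|h6
      · rw [h0, delta_eval n i 0 0 hn (by omega) (by omega)]; omega
      · rw [h1, delta_eval n i 1 0 hn (by omega) (by omega)]; omega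
      · rw [h2, delta_eval n i 2 0 hn (by omega) (by omega)]; omega
      · rw [h3, delta_eval n i 3 1 hn (by omega) (by omega)]; omega
      · rw [h4, delta_eval n i 4 1 hn (by omega) (by omega)]; omega
      · rw [h5, delta_eval n i 5 1 hn (by omega) (by omega)]; omega
      · rw [h6, delta_eval n i 6 2 hn (by omega) (by omega)]; omega
  · -- decreasing on [M_i, m_(i+1))
    intro i h0 h3 j hjM hjm
    rw [M25p] at hjM
    rw [m25p] at hjm
    rcases le_or_gt i (2*n-1) with hc | hc
    · rw [if_pos hc] at hjM
      rw [tau_succ n j (by omega)]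
      rcases le_or_gt n i with hni | hni
      · have hr : j = 10*i + 1 ∨ j = 10*i + 2 ∨ j = 10*i + 3 ∨ j = 10*i + 4 ∨ j = 10*i + 5 ∨ j = 10*i + 6 ∨ j = 10*i + 7 ∨ j = 10*i + 8 ∨ j = 10*i + 9 := by omega
        rcases hr with h1|h2|h3|h4|h5|h6|h7|h8|h9
        · rw [h1, delta_eval n i 1 0 hn (by omega) (by omega)]; omega
        · rw [h2, delta_eval n i 2 0 hn (by omega) (by omega)]; omega
        · rw [h3, delta_eval n i 3 1 hn (by omega) (by omega)]; omega
        · rw [h4, delta_eval n i 4 1 hn (by omega) (by omega)]; omega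
        · rw [h5, delta_eval n i 5 1 hn (by omega) (by omega)]; omega
        · rw [h6, delta_eval n i 6 1 hn (by omega) (by omega)]; omega
        · rw [h7, delta_eval n i 7 2 hn (by omega) (by omega)]; omega
        · rw [h8, delta_eval n i 8 2 hn (by omega) (by omega)]; omega
        · rw [h9, delta_eval n i 9 2 hn (by omega) (by omega)]; omega
      · have hr : j = 10*i + 1 ∨ j = 10*i + 2 ∨ j = 10*i + 3 ∨ j = 10*i + 4 ∨ j = 10*i + 5 ∨ j = 10*i + 6 ∨ j = 10*i + 7 ∨ j = 10*i + 8 ∨ j = 10*i + 9 := by omega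
        rcases hr with h1|h2|h3|h4|h5|h6|h7|h8|h9
        · rw [h1, delta_eval n i 1 0 hn (by omega) (by omega)]; omega
        · rw [h2, delta_eval n i 2 0 hn (by omega) (by omega)]; omega
        · rw [h3, delta_eval n i 3 0 hn (by omega) (by omega)]; omega
        · rw [h4, delta_eval n i 4 1 hn (by omega) (by omega)]; omega
        · rw [h5, delta_eval n i 5 1 hn (by omega) (by omega)]; omega
        · rw [h6, delta_eval n i 6 1 hn (by omega) (by omega)]; omega
        · rw [h7, delta_eval n i 7 2 hn (by omega) (by omega)]; omega
        · rw [h8, delta_eval n i 8 2 hn (by omega) (by omega)]; omega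
        · rw [h9, delta_eval n i 9 2 hn (by omega) (by omega)]; omega
    · rw [if_neg (by omega)] at hjM
      rw [tau_succ n j (by omega)]
      have hr : j = 10*i + 7 ∨ j = 10*i + 8 ∨ j = 10*i + 9 := by omega
      rcases hr with h7|h8|h9
      · rw [h7, delta_eval n i 7 2 hn (by omega) (by omega)]; omega
      · rw [h8, delta_eval n i 8 2 hn (by omega) (by omega)]; omega
      · rw [h9, delta_eval n i 9 2 hn (by omega) (by omega)]; omega
  · -- increasing beyond m_(3n)
    intro j hj
    rw [m25p] at hj
    rw [tau_succ n j (by omega)]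
    obtain ⟨q, r, hqr, hr0, hr9⟩ : ∃ q r : ℤ, j = 10*q + r ∧ 0 ≤ r ∧ r < 10 :=
      ⟨j / 10, j % 10, by omega, by omega, by omega⟩
    have hq : 3*n ≤ q := by omega
    have hr : r = 0 ∨ r = 1 ∨ r = 2 ∨ r = 3 ∨ r = 4 ∨ r = 5 ∨ r = 6 ∨ r = 7 ∨ r = 8 ∨ r = 9 := by
      omega
    rcases hr with h|h|h|h|h|h|h|h|h|h <;> subst h
    · rw [show j = 10*q + 0 from by omega, delta_key n q 0 hn]
      have hlb : (0 : ℤ) ≤ (q + 0*(3*n+1)) / (10*n+3) := by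
        rw [Int.le_ediv_iff_mul_le (by omega)]
        omega
      omega
    · rw [show j = 10*q + 1 from by omega, delta_key n q 1 hn]
      have hlb : (0 : ℤ) ≤ (q + 1*(3*n+1)) / (10*n+3) := by
        rw [Int.le_ediv_iff_mul_le (by omega)]
        omega
      omega
    · rw [show j = 10*q + 2 from by omega, delta_key n q 2 hn]
      have hlb : (0 : ℤ) ≤ (q + 2*(3*n+1)) / (10*n+3) := by
        rw [Int.le_ediv_iff_mul_le (by omega)]
        omega
      omega
    · rw [show j = 10*q + 3 from by omega, delta_key n q 3 hn]
      have hlb : (1 : ℤ) ≤ (q + 3*(3*n+1)) / (10*n+3) := by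
        rw [Int.le_ediv_iff_mul_le (by omega)]
        omega
      omega
    · rw [show j = 10*q + 4 from by omega, delta_key n q 4 hn]
      have hlb : (1 : ℤ) ≤ (q + 4*(3*n+1)) / (10*n+3) := by
        rw [Int.le_ediv_iff_mul_le (by omega)]
        omega
      omega
    · rw [show j = 10*q + 5 from by omega, delta_key n q 5 hn]
      have hlb : (1 : ℤ) ≤ (q + 5*(3*n+1)) / (10*n+3) := by
        rw [Int.le_ediv_iff_mul_le (by omega)]
        omega
      omega
    · rw [show j = 10*q + 6 from by omega, delta_key n q 6 hn]
      have hlb : (1 : ℤ) ≤ (q + 6*(3*n+1)) / (10*n+3) := by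
        rw [Int.le_ediv_iff_mul_le (by omega)]
        omega
      omega
    · rw [show j = 10*q + 7 from by omega, delta_key n q 7 hn]
      have hlb : (2 : ℤ) ≤ (q + 7*(3*n+1)) / (10*n+3) := by
        rw [Int.le_ediv_iff_mul_le (by omega)]
        omega
      omega
    · rw [show j = 10*q + 8 from by omega, delta_key n q 8 hn]
      have hlb : (2 : ℤ) ≤ (q + 8*(3*n+1)) / (10*n+3) := by
        rw [Int.le_ediv_iff_mul_le (by omega)]
        omega
      omega
    · rw [show j = 10*q + 9 from by omega, delta_key n q 9 hn]
      have hlb : (3 : ℤ) ≤ (q + 9*(3*n+1)) / (10*n+3) := by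
        rw [Int.le_ediv_iff_mul_le (by omega)]
        omega
      omega
  · -- τ(M_i) = 1 - i for 0 ≤ i ≤ n-1
    intro i h0 h1
    rw [M25p, if_pos (by omega : i ≤ 2*n-1), tau_succ n (10*i) (by omega)]
    have hm := tau_m n hn i h0 (by omega)
    have hd := delta_eval n i 0 0 hn (by omega) (by omega)
    rw [show (10*i+(0:ℤ)) = 10*i from by ring] at hd
    omega
  · -- τ(M_i) = 1 - n for n ≤ i ≤ 2n-1
    intro i h0 h1
    rw [M25p, if_pos (by omega : i ≤ 2*n-1), tau_succ n (10*i) (by omega)]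
    have hm := tau_m n hn i (by omega) (by omega)
    have hd := delta_eval n i 0 0 hn (by omega) (by omega)
    rw [show (10*i+(0:ℤ)) = 10*i from by ring] at hd
    omega
  · -- τ(M_i) = 2 - 3n + i for 2n ≤ i ≤ 3n-1
    intro i h0 h1
    rw [M25p, if_neg (by omega)]
    have hs := tau_step7 n i (by omega)
    have hm := tau_m n hn i (by omega) (by omega)
    have d0 : delta25p n (10*i) = 1 := by
      have h := delta_eval n i 0 0 hn (by omega) (by omega)
      rw [show (10*i+(0:ℤ)) = 10*i from by ring] at h
      omega
    have d1 : delta25p n (10*i+1) = 0 := by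
      have h := delta_eval n i 1 0 hn (by omega) (by omega)
      omega
    have d2 : delta25p n (10*i+2) = 0 := by
      have h := delta_eval n i 2 0 hn (by omega) (by omega)
      omega
    have d3 : delta25p n (10*i+3) = 0 := by
      have h := delta_eval n i 3 1 hn (by omega) (by omega)
      omega
    have d4 : delta25p n (10*i+4) = 0 := by
      have h := delta_eval n i 4 1 hn (by omega) (by omega)
      omega
    have d5 : delta25p n (10*i+5) = 0 := by
      have h := delta_eval n i 5 1 hn (by omega) (by omega)
      omega
    have d6 : delta25p n (10*i+6) = 1 := by
      have h := delta_eval n i 6 2 hn (by omega) (by omega)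
      omega
    omega
  · -- τ(m_i) = -i for 0 ≤ i ≤ n-1
    intro i h0 h1
    rw [m25p]
    have hm := tau_m n hn i h0 (by omega)
    omega
  · -- τ(m_i) = -n for n ≤ i ≤ 2n
    intro i h0 h1
    rw [m25p]
    have hm := tau_m n hn i (by omega) (by omega)
    omega
  · -- τ(m_i) = -3n + i for 2n+1 ≤ i ≤ 3n
    intro i h0 h1
    rw [m25p]
    have hm := tau_m n hn i (by omega) (by omega)
    omega
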